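/- arXiv:1812.05515 — 2 statements merged into one kernel-verified Lean document; each statement's English description precedes it below -/
import Mathlib

section
/- Let 0 < β < μ and k ≥ 0, and let m1(t) = k/(μ−β) + (1 − k/(μ−β))·e^{−(μ−β)t}. Then the function m2(t) = k(k+μ)/(μ−β)² + ((μ² − 2k² − β² + kμ − 3kβ)/(μ−β)²)·e^{−(μ−β)t} + ((k² + 2β² + 3kβ − 2μβ − 2kμ)/(μ−β)²)·e^{−2(μ−β)t} satisfies m2'(t) = 2(β−μ)·m2(t) + (β + μ + 2k)·m1(t) + k for all t ≥ 0 with m2(0) = 1. -/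
/-- The second moment of the Galton–Watson process with immigration
(duplication rate `β`, death rate `μ`, immigration rate `k`, `0 < β < μ`,
one initial particle) satisfies `m2' = 2(β-μ) m2 + (β+μ+2k) m1 + k`, `m2 0 = 1`,
where `m1` is the first moment. -/
theorem stmt_2 (β μ k : ℝ) (hβ : 0 < β) (hβμ : β < μ) (hk : 0 ≤ k) :
    let m1 : ℝ → ℝ := fun t => k / (μ - β) + (1 - k / (μ - β)) * Real.exp (-(μ - β) * t)
    let m2 : ℝ → ℝ := fun t =>
      k * (k + μ) / (μ - β) ^ 2
        + (μ ^ 2 - 2 * k ^ 2 - β ^ 2 + k * μ - 3 * k * β) / (μ - β) ^ 2 * Real.exp (-(μ - β) * t)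
        + (k ^ 2 + 2 * β ^ 2 + 3 * k * β - 2 * μ * β - 2 * k * μ) / (μ - β) ^ 2
            * Real.exp (-2 * (μ - β) * t)
    (∀ t : ℝ, t ≥ 0 →
        HasDerivAt m2 (2 * (β - μ) * m2 t + (β + μ + 2 * k) * m1 t + k) t) ∧ m2 0 = 1 := by
  intro m1 m2
  have hne : μ - β ≠ 0 := by linarith
  constructor
  · intro t ht
    have h1 : HasDerivAt (fun t : ℝ => Real.exp (-(μ - β) * t))
        (Real.exp (-(μ - β) * t) * (-(μ - β))) t := by
      simpa [mul_comm] using ((hasDerivAt_id t).const_mul (-(μ - β))).exp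
    have h2 : HasDerivAt (fun t : ℝ => Real.exp (-2 * (μ - β) * t))
        (Real.exp (-2 * (μ - β) * t) * (-2 * (μ - β))) t := by
      simpa [mul_comm] using ((hasDerivAt_id t).const_mul (-2 * (μ - β))).exp
    simp only [m1, m2]
    have h : HasDerivAt (fun t : ℝ =>
      k * (k + μ) / (μ - β) ^ 2
        + (μ ^ 2 - 2 * k ^ 2 - β ^ 2 + k * μ - 3 * k * β) / (μ - β) ^ 2 * Real.exp (-(μ - β) * t)
        + (k ^ 2 + 2 * β ^ 2 + 3 * k * β - 2 * μ * β - 2 * k * μ) / (μ - β) ^ 2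
            * Real.exp (-2 * (μ - β) * t))
        ((μ ^ 2 - 2 * k ^ 2 - β ^ 2 + k * μ - 3 * k * β) / (μ - β) ^ 2 *
            (Real.exp (-(μ - β) * t) * (-(μ - β)))
          + (k ^ 2 + 2 * β ^ 2 + 3 * k * β - 2 * μ * β - 2 * k * μ) / (μ - β) ^ 2 *
            (Real.exp (-2 * (μ - β) * t) * (-2 * (μ - β)))) t :=
      by exact (((hasDerivAt_const t _).add (h1.const_mul _)).add (h2.const_mul _)).congr_deriv (by ring)
    convert h using 1
    field_simp
    ring
  · simp only [m2, mul_zero, Real.exp_zero, mul_one]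
    field_simp
    ring
end

section
/- Fix 0 < β < μ. For k > 0 define a_n(k) = (β/μ)^n · Γ(k/β + n)/(Γ(k/β)·n!), n0(k) = ⌊k/(μ−β)⌋, and σ_k² = μk/(μ−β)². Then as k → ∞, a_{n0(k)}(k) · √(2π σ_k²) · ((μ−β)/μ)^{k/β} → 1; equivalently a_{n0(k)}(k) ∼ (1/√(2π σ_k²))·(μ/(μ−β))^{k/β}. -/
open Real Filter

noncomputable def fSt (x : ℝ) : ℝ := (x - 1/2) * Real.log x - x + Real.log (2*Real.pi) / 2

noncomputable def Efact (n : ℕ) : ℝ :=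
  Real.log n.factorial - (((n:ℝ) + 1/2) * Real.log n - n + Real.log (2*Real.pi) / 2)

lemma Efact_tendsto : Tendsto Efact atTop (nhds 0) := by
  have h := Stirling.tendsto_stirlingSeq_sqrt_pi
  have hπ : (0:ℝ) < √π := Real.sqrt_pos.mpr Real.pi_pos
  have h2 : Tendsto (fun n => Real.log (Stirling.stirlingSeq n) - Real.log (√π)) atTop
      (nhds (Real.log (√π) - Real.log (√π))) :=
    ((Real.continuousAt_log hπ.ne').tendsto.comp h).sub_const _
  rw [sub_self] at h2
  refine h2.congr' ?_
  filter_upwards [eventually_ge_atTop 1] with n hn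
  have hn0 : (0:ℝ) < (n:ℝ) := by exact_mod_cast hn
  have hfac : (0:ℝ) < (n.factorial : ℝ) := by exact_mod_cast n.factorial_pos
  have hs : (0:ℝ) < √(2*(n:ℝ)) := Real.sqrt_pos.mpr (by linarith)
  have hp : (0:ℝ) < ((n:ℝ) / Real.exp 1) ^ n := pow_pos (div_pos hn0 (Real.exp_pos 1)) n
  have : Real.log (Stirling.stirlingSeq n)
      = Real.log n.factorial - (Real.log (2*(n:ℝ)) / 2 + n * (Real.log n - 1)) := by
    rw [Stirling.stirlingSeq, Real.log_div hfac.ne' (by positivity),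
      Real.log_mul hs.ne' hp.ne', Real.log_sqrt (by linarith), Real.log_pow,
      Real.log_div hn0.ne' (Real.exp_pos 1).ne', Real.log_exp]
  rw [this]
  rw [Real.log_mul two_ne_zero hn0.ne', Efact, Real.log_mul two_ne_zero Real.pi_pos.ne',
    Real.log_sqrt Real.pi_pos.le]
  ring

lemma Egam_nat_tendsto :
    Tendsto (fun m : ℕ => Real.log (Real.Gamma m) - fSt m) atTop (nhds 0) := by
  refine Efact_tendsto.congr' ?_
  filter_upwards [eventually_ge_atTop 1] with m hm
  obtain ⟨j, rfl⟩ : ∃ j, m = j + 1 := ⟨m - 1, by omega⟩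
  have hg : Real.Gamma ((j:ℕ) + 1 : ℕ) = (j.factorial : ℝ) := by
    rw [Nat.cast_add, Nat.cast_one, Real.Gamma_nat_eq_factorial]
  have hm0 : (0:ℝ) < ((j:ℝ)+1) := by positivity
  have hfac : ((j+1).factorial : ℝ) = ((j:ℝ)+1) * (j.factorial : ℝ) := by
    rw [Nat.factorial_succ]; push_cast; ring
  have hjf : (0:ℝ) < (j.factorial : ℝ) := by exact_mod_cast j.factorial_pos
  rw [Efact, fSt, hg, hfac, Real.log_mul hm0.ne' hjf.ne']
  push_cast
  ring

set_option maxHeartbeats 2000000 in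
lemma gamma_stirling :
    Tendsto (fun x : ℝ => Real.log (Real.Gamma x) - fSt x) atTop (nhds 0) := by
  have key : ∀ᶠ x : ℝ in atTop,
      |Real.log (Real.Gamma x) - fSt x
        - (Real.log (Real.Gamma (⌊x⌋₊:ℝ)) - fSt (⌊x⌋₊:ℝ))| ≤ 2 / (⌊x⌋₊:ℝ) := by
    filter_upwards [eventually_ge_atTop (2:ℝ)] with x hx
    have hx0 : (0:ℝ) < x := by linarith
    have hm2 : (2:ℕ) ≤ ⌊x⌋₊ := Nat.le_floor (by exact_mod_cast hx)
    set M : ℝ := (⌊x⌋₊:ℝ) with hMdef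
    have hmR : (2:ℝ) ≤ M := by rw [hMdef]; exact_mod_cast hm2
    have hmx : M ≤ x := Nat.floor_le hx0.le
    have hxm1 : x < M + 1 := Nat.lt_floor_add_one x
    clear_value M
    have hm0 : (0:ℝ) < M := by linarith
    obtain ⟨s, hsdef⟩ : ∃ s : ℝ, s = x - M := ⟨_, rfl⟩
    have hs0 : 0 ≤ s := by rw [hsdef]; linarith
    have hs1 : s < 1 := by rw [hsdef]; linarith
    have hΓm : 0 < Real.Gamma M := Real.Gamma_pos_of_pos hm0
    have hΓx : 0 < Real.Gamma x := Real.Gamma_pos_of_pos hx0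
    have hcvx := Real.convexOn_log_Gamma.2
    have hub : Real.log (Real.Gamma x) ≤ Real.log (Real.Gamma M) + s * Real.log M := by
      have h1 := hcvx (Set.mem_Ioi.mpr hm0) (Set.mem_Ioi.mpr (by linarith : (0:ℝ) < M+1))
        (by linarith : (0:ℝ) ≤ 1 - s) hs0 (by ring)
      have hq : (1-s) • M + s • (M+1) = x := by
        simp only [smul_eq_mul]; rw [hsdef]; ring
      rw [hq] at h1
      have hl1 : Real.log (Real.Gamma (M+1)) = Real.log M + Real.log (Real.Gamma M) := by
        rw [Real.Gamma_add_one hm0.ne', Real.log_mul hm0.ne' hΓm.ne']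
      simp only [Function.comp_apply, smul_eq_mul] at h1
      rw [hl1] at h1
      nlinarith [h1]
    have hlb : Real.log (Real.Gamma M) + Real.log M
        ≤ Real.log (Real.Gamma x) + (1 - s) * Real.log x := by
      have h1 := hcvx (Set.mem_Ioi.mpr hx0) (Set.mem_Ioi.mpr (by linarith : (0:ℝ) < x+1))
        hs0 (by linarith : (0:ℝ) ≤ 1 - s) (by ring)
      have hq : s • x + (1-s) • (x+1) = M + 1 := by
        simp only [smul_eq_mul]; rw [hsdef]; ring
      rw [hq] at h1
      simp only [Function.comp_apply, smul_eq_mul] at h1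
      rw [Real.Gamma_add_one hm0.ne', Real.log_mul hm0.ne' hΓm.ne',
        Real.Gamma_add_one hx0.ne', Real.log_mul hx0.ne' hΓx.ne'] at h1
      nlinarith [h1]
    obtain ⟨L, hLd⟩ : ∃ L : ℝ, L = Real.log (x / M) := ⟨_, rfl⟩
    have hLdef : Real.log x = Real.log M + L := by
      rw [hLd, Real.log_div hx0.ne' hm0.ne']; ring
    have hL1 : L ≤ s / M := by
      have h := Real.log_le_sub_one_of_pos (div_pos hx0 hm0)
      rw [← hLd] at h
      have he : x / M - 1 = s / M := by rw [hsdef]; field_simp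
      linarith [he ▸ h]
    have hL0 : 0 ≤ L := by
      rw [hLd]
      exact Real.log_nonneg (by rw [le_div_iff₀ hm0]; linarith)
    have hL2 : s / x ≤ L := by
      have h := Real.log_le_sub_one_of_pos (div_pos hm0 hx0)
      have hinv : Real.log (M / x) = -L := by
        rw [Real.log_div hm0.ne' hx0.ne', hLd, Real.log_div hx0.ne' hm0.ne']; ring
      rw [hinv] at h
      have he : M / x - 1 = -(s / x) := by rw [hsdef]; field_simp; ring
      linarith [he ▸ h]
    have hid : fSt x - fSt M - s * Real.log M = (x - 1/2) * L - s := by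
      simp only [fSt]
      rw [hLdef]
      linear_combination (1 - Real.log M) * hsdef
    have hxhalf : (0:ℝ) ≤ x - 1/2 := by linarith
    have hC1 : (x - 1/2) * L - s ≤ 1 / M := by
      have h1 : (x - 1/2) * L ≤ (x - 1/2) * (s/M) := mul_le_mul_of_nonneg_left hL1 hxhalf
      have h2 : (x - 1/2) * (s/M) - s = s*(s - 1/2)/M := by
        rw [hsdef]; field_simp; ring
      have hnum : s*(s-1/2) ≤ 1 := by nlinarith
      have h4 : s*(s-1/2)/M ≤ 1/M := by
        rw [div_le_div_iff₀ hm0 hm0]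
        nlinarith [mul_le_mul_of_nonneg_right hnum hm0.le]
      linarith [h1, h2, h4]
    have hC2 : -(1 / M) ≤ (x - 1/2) * L - s := by
      have h1 : (x - 1/2) * (s/x) ≤ (x - 1/2) * L := mul_le_mul_of_nonneg_left hL2 hxhalf
      have h2 : (x - 1/2) * (s/x) - s = -(s/(2*x)) := by
        field_simp
        ring
      have h3 : s/(2*x) ≤ 1/M := by
        rw [div_le_div_iff₀ (by linarith) hm0]
        nlinarith
      linarith [h1, h2, h3]
    have e2 : (1-s) * L ≤ s/M := by nlinarith [hL1, hL0]
    have e3 : Real.log M - (1-s)*Real.log x - (s*Real.log M + (x-1/2)*L - s)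
        = -((1-s)*L) - ((x-1/2)*L - s) := by rw [hLdef]; ring
    have e4 : s/M ≤ 1/M := by rw [div_le_div_iff₀ hm0 hm0]; nlinarith
    have e5 : (0:ℝ) ≤ 1/M := by positivity
    have e6 : 2/M = 1/M + 1/M := by ring
    rw [abs_le]
    constructor
    · linarith [hlb, hid, e3, e2, hC1, e4, e6]
    · linarith [hub, hid, hC2, e5, e6]
  have h1 : Tendsto (fun x : ℝ => Real.log (Real.Gamma (⌊x⌋₊:ℝ)) - fSt (⌊x⌋₊:ℝ)) atTop (nhds 0) :=
    Egam_nat_tendsto.comp tendsto_nat_floor_atTop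
  have h2 : Tendsto (fun x : ℝ => 2 / (⌊x⌋₊:ℝ)) atTop (nhds 0) :=
    (tendsto_const_div_atTop_nhds_zero_nat 2).comp tendsto_nat_floor_atTop
  have hlo := h1.sub h2
  have hhi := h1.add h2
  rw [sub_zero] at hlo; rw [add_zero] at hhi
  refine tendsto_of_tendsto_of_tendsto_of_le_of_le' hlo hhi ?_ ?_
  · filter_upwards [key] with x hx
    rw [abs_le] at hx
    linarith [hx.1]
  · filter_upwards [key] with x hx
    rw [abs_le] at hx
    linarith [hx.2]

set_option maxHeartbeats 1000000 in
lemma lemJ (A d : ℝ → ℝ) (c : ℝ) (hA : Tendsto A atTop atTop)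
    (hd : ∀ᶠ k in atTop, d k ∈ Set.Icc (0:ℝ) 1) :
    Tendsto (fun k => (A k - d k + c) * Real.log ((A k - d k)/A k) + d k) atTop (nhds 0) := by
  have hA1 : Tendsto (fun k => A k - 1) atTop atTop :=
    tendsto_atTop_add_const_right _ (-1) hA |>.congr (fun k => by ring)
  have hinv : Tendsto (fun k => (|c|+1) / (A k - 1)) atTop (nhds 0) := by
    have h2 := hA1.inv_tendsto_atTop.const_mul (|c|+1)
    rw [mul_zero] at h2
    exact h2.congr (fun k => by simp [Pi.inv_apply, div_eq_mul_inv])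
  have hneg : Tendsto (fun k => -((|c|+1) / (A k - 1))) atTop (nhds 0) := by
    have := hinv.neg; rwa [neg_zero] at this
  have key : ∀ᶠ k in atTop,
      -((|c|+1) / (A k - 1)) ≤ (A k - d k + c) * Real.log ((A k - d k)/A k) + d k
      ∧ (A k - d k + c) * Real.log ((A k - d k)/A k) + d k ≤ (|c|+1) / (A k - 1) := by
    filter_upwards [hd, hA.eventually_ge_atTop (|c| + 3)] with k hk hAk
    obtain ⟨hd0, hd1⟩ := hk
    have hc0 : 0 ≤ |c| := abs_nonneg c
    have hcc := abs_le.mp (le_refl |c|)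
    have hA0 : (0:ℝ) < A k := by linarith
    have hA1p : (0:ℝ) < A k - 1 := by linarith
    have hAd : (0:ℝ) < A k - d k := by linarith
    have hcoef : (0:ℝ) ≤ A k - d k + c := by linarith [hcc.1]
    have hub : Real.log ((A k - d k)/A k) ≤ -(d k / A k) := by
      have h := Real.log_le_sub_one_of_pos (div_pos hAd hA0)
      have he : (A k - d k)/A k - 1 = -(d k / A k) := by field_simp; ring
      linarith [he ▸ h]
    have hlb : -(d k/(A k - d k)) ≤ Real.log ((A k - d k)/A k) := by
      have h := Real.log_le_sub_one_of_pos (div_pos hA0 hAd)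
      have hinv2 : Real.log (A k/(A k - d k)) = -Real.log ((A k - d k)/A k) := by
        rw [Real.log_div hA0.ne' hAd.ne', Real.log_div hAd.ne' hA0.ne']; ring
      rw [hinv2] at h
      have he : A k/(A k - d k) - 1 = d k/(A k - d k) := by field_simp; ring
      linarith [he ▸ h]
    have hDc : d k * c ≤ |c| := by
      nlinarith [mul_nonneg hd0 (by linarith [hcc.2] : (0:ℝ) ≤ |c| - c),
        mul_nonneg (by linarith : (0:ℝ) ≤ 1 - d k) hc0]
    have hDDc : d k * (d k - c) ≤ |c| + 1 := by
      nlinarith [mul_nonneg hd0 (by linarith [hcc.1] : (0:ℝ) ≤ |c| + c),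
        mul_nonneg (by linarith : (0:ℝ) ≤ 1 - d k) hc0, mul_nonneg hd0 hd0,
        mul_nonneg hd0 (by linarith : (0:ℝ) ≤ 1 - d k)]
    constructor
    · have h1 : (A k - d k + c) * (-(d k/(A k - d k))) ≤
          (A k - d k + c) * Real.log ((A k - d k)/A k) :=
        mul_le_mul_of_nonneg_left hlb hcoef
      have h2 : d k + (A k - d k + c) * (-(d k/(A k - d k))) = -(d k * c/(A k - d k)) := by
        field_simp; ring
      have h3 : d k * c/(A k - d k) ≤ (|c|+1)/(A k - 1) := by
        rw [div_le_div_iff₀ hAd hA1p]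
        nlinarith [mul_le_mul_of_nonneg_right hDc hA1p.le,
          mul_nonneg (by linarith : (0:ℝ) ≤ 1 - d k) hc0]
      linarith [h1, h2, h3]
    · have h1 : (A k - d k + c) * Real.log ((A k - d k)/A k) ≤
          (A k - d k + c) * (-(d k/A k)) :=
        mul_le_mul_of_nonneg_left hub hcoef
      have h2 : d k + (A k - d k + c) * (-(d k/A k)) = d k * (d k - c)/A k := by
        field_simp; ring
      have h3 : d k * (d k - c)/A k ≤ (|c|+1)/(A k - 1) := by
        rw [div_le_div_iff₀ hA0 hA1p]
        nlinarith [mul_le_mul_of_nonneg_right hDDc hA1p.le]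
      linarith [h1, h2, h3]
  refine tendsto_of_tendsto_of_tendsto_of_le_of_le' hneg hinv ?_ ?_
  · filter_upwards [key] with k hk; exact hk.1
  · filter_upwards [key] with k hk; exact hk.2

lemma phi_eq (β μ r nR : ℝ) (hβ : 0 < β) (hβμ : β < μ) (hr : 0 < r) (hn : 0 < nR) :
    nR * Real.log (β/μ) + fSt (r + nR) - fSt r
      - ((nR + 1/2) * Real.log nR - nR + Real.log (2*Real.pi)/2)
      + (1/2) * Real.log (2*Real.pi*(μ*(β*r)/(μ-β)^2)) + r * Real.log ((μ-β)/μ)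
    = (r + nR - 1/2) * Real.log ((r + nR)/(μ*r/(μ-β)))
      - (nR + 1/2) * Real.log (nR/(β*r/(μ-β))) := by
  have hμ : 0 < μ := hβ.trans hβμ
  have hd : 0 < μ - β := sub_pos.mpr hβμ
  have hrn : 0 < r + nR := by linarith
  have e1 : Real.log (β/μ) = Real.log β - Real.log μ := Real.log_div hβ.ne' hμ.ne'
  have e2 : Real.log ((μ-β)/μ) = Real.log (μ-β) - Real.log μ := Real.log_div hd.ne' hμ.ne'
  have e3 : Real.log (2*Real.pi*(μ*(β*r)/(μ-β)^2))
      = Real.log 2 + Real.log Real.pi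
        + (Real.log μ + (Real.log β + Real.log r) - 2*Real.log (μ-β)) := by
    rw [Real.log_mul (by positivity) (by positivity),
      Real.log_mul two_ne_zero Real.pi_ne_zero,
      Real.log_div (by positivity) (by positivity),
      Real.log_mul hμ.ne' (by positivity),
      Real.log_mul hβ.ne' hr.ne', Real.log_pow]
    push_cast
    ring
  have e4 : Real.log (2*Real.pi) = Real.log 2 + Real.log Real.pi :=
    Real.log_mul two_ne_zero Real.pi_ne_zero
  have e5 : Real.log ((r+nR)/(μ*r/(μ-β)))
      = Real.log (r+nR) - (Real.log μ + Real.log r - Real.log (μ-β)) := by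
    rw [Real.log_div hrn.ne' (by positivity), Real.log_div (by positivity) hd.ne',
      Real.log_mul hμ.ne' hr.ne']
  have e6 : Real.log (nR/(β*r/(μ-β)))
      = Real.log nR - (Real.log β + Real.log r - Real.log (μ-β)) := by
    rw [Real.log_div hn.ne' (by positivity), Real.log_div (by positivity) hd.ne',
      Real.log_mul hβ.ne' hr.ne']
  simp only [fSt]
  rw [e1, e2, e3, e4, e5, e6]
  ring

/-- Asymptotics of the invariant weight at the mode: for `0 < β < μ`, with
`a_n(k) = (β/μ)^n Γ(k/β+n)/(Γ(k/β) n!)`, `n0(k) = ⌊k/(μ-β)⌋` and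
`σ_k² = μk/(μ-β)²`, one has
`a_{n0(k)}(k) √(2π σ_k²) ((μ-β)/μ)^{k/β} → 1` as `k → ∞`. -/
theorem stmt_8 (β μ : ℝ) (hβ : 0 < β) (hβμ : β < μ) :
    let a : ℝ → ℕ → ℝ := fun k n =>
      (β / μ) ^ n * Real.Gamma (k / β + n) / (Real.Gamma (k / β) * (n.factorial : ℝ))
    let n0 : ℝ → ℕ := fun k => ⌊k / (μ - β)⌋₊
    let σsq : ℝ → ℝ := fun k => μ * k / (μ - β) ^ 2
    Filter.Tendsto
      (fun k : ℝ => a k (n0 k) * Real.sqrt (2 * Real.pi * σsq k) * ((μ - β) / μ) ^ (k / β))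
      Filter.atTop (nhds 1) := by
  intro a n0 σsq
  have hμ : 0 < μ := hβ.trans hβμ
  have hd : 0 < μ - β := sub_pos.mpr hβμ
  have ha : ∀ k, a k (n0 k) = (β/μ) ^ (n0 k) * Real.Gamma (k/β + (n0 k : ℝ))
      / (Real.Gamma (k/β) * ((n0 k).factorial : ℝ)) := fun _ => rfl
  have hσ : ∀ k, σsq k = μ * k / (μ - β)^2 := fun _ => rfl
  have hn0d : ∀ k, n0 k = ⌊k/(μ-β)⌋₊ := fun _ => rfl
  -- the log of the product
  set LT : ℝ → ℝ := fun k =>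
    ((n0 k : ℝ)) * Real.log (β/μ) + Real.log (Real.Gamma (k/β + (n0 k : ℝ)))
      - Real.log (Real.Gamma (k/β)) - Real.log ((n0 k).factorial)
      + (1/2) * Real.log (2*Real.pi*(μ * k/(μ-β)^2)) + (k/β) * Real.log ((μ-β)/μ)
    with hLT
  -- basic tendsto facts
  have hr_t : Tendsto (fun k : ℝ => k/β) atTop atTop := tendsto_id.atTop_div_const hβ
  have hrn_t : Tendsto (fun k : ℝ => k/β + (n0 k : ℝ)) atTop atTop :=
    tendsto_atTop_mono (fun k => le_add_of_nonneg_right (Nat.cast_nonneg _)) hr_t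
  have hn0_t : Tendsto n0 atTop atTop :=
    tendsto_nat_floor_atTop.comp (tendsto_id.atTop_div_const hd)
  -- Stirling pieces
  have h1 : Tendsto (fun k : ℝ =>
      Real.log (Real.Gamma (k/β + (n0 k : ℝ))) - fSt (k/β + (n0 k : ℝ))) atTop (nhds 0) :=
    gamma_stirling.comp hrn_t
  have h2 : Tendsto (fun k : ℝ => Real.log (Real.Gamma (k/β)) - fSt (k/β)) atTop (nhds 0) :=
    gamma_stirling.comp hr_t
  have h3 : Tendsto (fun k : ℝ => Efact (n0 k)) atTop (nhds 0) := Efact_tendsto.comp hn0_t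
  -- the elementary part
  have h4 : Tendsto (fun k : ℝ =>
      ((n0 k : ℝ)) * Real.log (β/μ) + fSt (k/β + (n0 k : ℝ)) - fSt (k/β)
        - (((n0 k : ℝ) + 1/2) * Real.log (n0 k) - (n0 k : ℝ) + Real.log (2*Real.pi)/2)
        + (1/2) * Real.log (2*Real.pi*(μ * k/(μ-β)^2)) + (k/β) * Real.log ((μ-β)/μ))
      atTop (nhds 0) := by
    set A : ℝ → ℝ := fun k => μ * (k/β) / (μ - β) with hAdef
    set B : ℝ → ℝ := fun k => β * (k/β) / (μ - β) with hBdef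
    set dd : ℝ → ℝ := fun k => k/(μ-β) - (n0 k : ℝ) with hdd
    have hA_t : Tendsto A atTop atTop :=
      (hr_t.const_mul_atTop hμ).atTop_div_const hd
    have hB_t : Tendsto B atTop atTop :=
      (hr_t.const_mul_atTop hβ).atTop_div_const hd
    have hdd_mem : ∀ᶠ k : ℝ in atTop, dd k ∈ Set.Icc (0:ℝ) 1 := by
      filter_upwards [eventually_ge_atTop (0:ℝ)] with k hk
      have h0 : 0 ≤ k/(μ-β) := div_nonneg hk hd.le
      constructor
      · simp only [hdd, hn0d, sub_nonneg]
        exact Nat.floor_le h0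
      · simp only [hdd, hn0d]
        have := Nat.lt_floor_add_one (k/(μ-β))
        linarith
    have hJ1 := lemJ A dd (-(1/2)) hA_t hdd_mem
    have hJ2 := lemJ B dd (1/2) hB_t hdd_mem
    have hsum := hJ1.sub hJ2
    rw [sub_zero] at hsum
    refine hsum.congr' ?_
    filter_upwards [eventually_gt_atTop (0:ℝ), eventually_ge_atTop (μ - β)] with k hk hk2
    have hrpos : 0 < k/β := div_pos hk hβ
    have hn1 : 1 ≤ n0 k := by
      rw [hn0d]
      exact Nat.le_floor (by rw [le_div_iff₀ hd]; push_cast; linarith)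
    have hnpos : (0:ℝ) < (n0 k : ℝ) := by exact_mod_cast hn1
    have hkr : β * (k/β) = k := by field_simp
    have hA1 : A k - dd k = k/β + (n0 k : ℝ) := by
      simp only [hAdef, hdd]
      field_simp
      ring
    have hB1 : B k - dd k = (n0 k : ℝ) := by
      simp only [hBdef, hdd]
      rw [hkr]
      ring
    have hphi := phi_eq β μ (k/β) (n0 k : ℝ) hβ hβμ hrpos hnpos
    rw [hkr] at hphi
    rw [hA1, hB1]
    simp only [hAdef, hBdef]
    rw [hkr, hphi]
    ring
  -- combine
  have hB : Tendsto LT atTop (nhds 0) := by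
    have hcomb := ((h1.sub h2).sub h3).add h4
    simp only [sub_zero, add_zero] at hcomb
    refine hcomb.congr (fun k => ?_)
    simp only [hLT, Efact]
    ring
  have hexp : Tendsto (fun k => Real.exp (LT k)) atTop (nhds 1) := by
    have := (Real.continuous_exp.tendsto 0).comp hB
    rw [Real.exp_zero] at this; exact this
  refine hexp.congr' ?_
  filter_upwards [eventually_gt_atTop (0:ℝ)] with k hk
  have hrpos : 0 < k/β := div_pos hk hβ
  have hΓ1 : 0 < Real.Gamma (k/β) := Real.Gamma_pos_of_pos hrpos
  have hΓ2 : 0 < Real.Gamma (k/β + (n0 k : ℝ)) :=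
    Real.Gamma_pos_of_pos (by positivity)
  have hfac : (0:ℝ) < ((n0 k).factorial : ℝ) := by exact_mod_cast (n0 k).factorial_pos
  have hq : 0 < (μ-β)/μ := div_pos hd hμ
  have hσpos : 0 < 2*Real.pi*(μ * k/(μ-β)^2) := by positivity
  have hap : 0 < a k (n0 k) := by
    rw [ha]
    exact div_pos (mul_pos (pow_pos (div_pos hβ hμ) _) hΓ2) (mul_pos hΓ1 hfac)
  have hsq : 0 < Real.sqrt (2*Real.pi*σsq k) := by
    rw [hσ]; exact Real.sqrt_pos.mpr hσpos
  have hw : 0 < ((μ-β)/μ) ^ (k/β) := Real.rpow_pos_of_pos hq _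
  have hTpos : 0 < a k (n0 k) * Real.sqrt (2*Real.pi*σsq k) * ((μ-β)/μ) ^ (k/β) :=
    mul_pos (mul_pos hap hsq) hw
  rw [← Real.exp_log hTpos]
  congr 1
  rw [Real.log_mul (mul_pos hap hsq).ne' hw.ne', Real.log_mul hap.ne' hsq.ne',
    ha, Real.log_div (by positivity) (by positivity),
    Real.log_mul (by positivity) hΓ2.ne', Real.log_mul hΓ1.ne' hfac.ne',
    Real.log_pow, hσ, Real.log_sqrt hσpos.le, Real.log_rpow hq]
  simp only [hLT]
  ring
end
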